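/- The function r ↦ [−r]^+ + max_{|S|=k} H(r,S), where H(r,S) = r + ∑_{i∈S} E[(X_i - r)^+], has no negative minimizer: for every ρ < 0, [−ρ]^+ + max_{|S|=k} H(ρ,S) > max_{|S|=k} H(0,S). Consequently min_{ρ∈ℝ}([−ρ]^+ + max_{|S|=k} H(ρ,S)) = min_{ρ∈ℝ} max_{|S|=k} H(ρ,S). -/

import Mathlib

open MeasureTheory

theorem no_negative_minimizer
    {Ω : Type*} [MeasurableSpace Ω] (μ : Measure Ω) [IsProbabilityMeasure μ]
    {n k : ℕ} (X : Fin n → Ω → ℝ)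
    (hX : ∀ i, Integrable (X i) μ) (hX0 : ∀ i ω, 0 ≤ X i ω)
    (hne : ∃ i, ∫ ω, X i ω ∂μ ≠ 0)
    (hk : 1 ≤ k) (hkn : k ≤ n)
    (Hmax : ℝ → ℝ)
    (hHmax : ∀ r, Hmax r =
      ((Finset.univ : Finset (Fin n)).powersetCard k).sup'
        (Finset.powersetCard_nonempty.2 (by simpa using hkn))
        (fun S => r + ∑ i ∈ S, ∫ ω, max (X i ω - r) 0 ∂μ)) :
    (∀ ρ < (0 : ℝ), Hmax 0 < max (-ρ) 0 + Hmax ρ) ∧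
      (⨅ ρ : ℝ, (max (-ρ) 0 + Hmax ρ)) = ⨅ ρ : ℝ, Hmax ρ := by
  have hP : ((Finset.univ : Finset (Fin n)).powersetCard k).Nonempty :=
    Finset.powersetCard_nonempty.2 (by simpa using hkn)
  set E : Fin n → ℝ := fun i => ∫ ω, X i ω ∂μ with hE
  have hE0 : ∀ i, 0 ≤ E i := fun i => integral_nonneg (fun ω => hX0 i ω)
  -- integral of (X i - r)^+ for r ≤ 0
  have hIneg : ∀ r ≤ (0:ℝ), ∀ i, ∫ ω, max (X i ω - r) 0 ∂μ = E i - r := by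
    intro r hr i
    have h1 : (fun ω => max (X i ω - r) 0) = fun ω => X i ω - r := by
      funext ω; exact max_eq_left (by linarith [hX0 i ω])
    rw [h1, integral_sub (hX i) (integrable_const r), integral_const]
    simp [hE]
  -- sup' of constant plus function
  have hsup : ∀ (c : ℝ) (g : Finset (Fin n) → ℝ),
      ((Finset.univ : Finset (Fin n)).powersetCard k).sup' hP (fun S => c + g S)
        = c + ((Finset.univ : Finset (Fin n)).powersetCard k).sup' hP g := by
    intro c g
    apply le_antisymm
    · exact Finset.sup'_le _ _ fun S hS => add_le_add_right (Finset.le_sup' g hS) c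
    · obtain ⟨S, hS, hSeq⟩ := Finset.exists_mem_eq_sup' hP g
      rw [hSeq]
      exact Finset.le_sup' (fun S => c + g S) hS
  set M : ℝ := ((Finset.univ : Finset (Fin n)).powersetCard k).sup' hP
    (fun S => ∑ i ∈ S, E i) with hM
  -- Hmax at nonpositive r
  have hHneg : ∀ r ≤ (0:ℝ), Hmax r = (1 - (k:ℝ)) * r + M := by
    intro r hr
    rw [hHmax r]
    have hcong : ∀ S ∈ (Finset.univ : Finset (Fin n)).powersetCard k,
        r + ∑ i ∈ S, ∫ ω, max (X i ω - r) 0 ∂μ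
          = (1 - (k:ℝ)) * r + ∑ i ∈ S, E i := by
      intro S hS
      have hcard : S.card = k := (Finset.mem_powersetCard.1 hS).2
      rw [Finset.sum_congr rfl (fun i _ => hIneg r hr i), Finset.sum_sub_distrib]
      simp [hcard]
      ring
    rw [Finset.sup'_congr hP rfl hcong]
    exact hsup ((1 - (k:ℝ)) * r) _
  have hH0 : Hmax 0 = M := by
    have := hHneg 0 le_rfl; simpa using this
  obtain ⟨S0, hS0⟩ := hP
  have hM0 : 0 ≤ M := by
    rw [hM]
    exact le_trans (Finset.sum_nonneg fun i _ => hE0 i)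
      (Finset.le_sup' (fun S => ∑ i ∈ S, E i) hS0)
  -- first part
  have part1 : ∀ ρ < (0 : ℝ), Hmax 0 < max (-ρ) 0 + Hmax ρ := by
    intro ρ hρ
    rw [hH0, hHneg ρ hρ.le, max_eq_left (by linarith)]
    have hk1 : (1:ℝ) ≤ (k:ℝ) := by exact_mod_cast hk
    nlinarith
  refine ⟨part1, ?_⟩
  -- Hmax ρ ≥ 0 everywhere
  have hHnn : ∀ ρ, 0 ≤ Hmax ρ := by
    intro ρ
    rcases le_or_gt ρ 0 with h | h
    · rw [hHneg ρ h]
      have hk1 : (1:ℝ) ≤ (k:ℝ) := by exact_mod_cast hk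
      nlinarith
    · rw [hHmax ρ]
      refine le_trans ?_ (Finset.le_sup' _ hS0)
      have : 0 ≤ ∑ i ∈ S0, ∫ ω, max (X i ω - ρ) 0 ∂μ :=
        Finset.sum_nonneg fun i _ =>
          integral_nonneg fun ω => le_max_right _ _
      linarith
  have hfnn : ∀ ρ, 0 ≤ max (-ρ) 0 + Hmax ρ := fun ρ =>
    add_nonneg (le_max_right _ _) (hHnn ρ)
  have bddH : BddBelow (Set.range Hmax) := ⟨0, by rintro x ⟨ρ, rfl⟩; exact hHnn ρ⟩
  have bddf : BddBelow (Set.range fun ρ => max (-ρ) 0 + Hmax ρ) :=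
    ⟨0, by rintro x ⟨ρ, rfl⟩; exact hfnn ρ⟩
  apply le_antisymm
  · apply le_ciInf; intro ρ
    rcases le_or_gt 0 ρ with h | h
    · calc (⨅ ρ : ℝ, (max (-ρ) 0 + Hmax ρ)) ≤ max (-ρ) 0 + Hmax ρ := ciInf_le bddf ρ
        _ = Hmax ρ := by rw [max_eq_right (by linarith)]; ring
    · calc (⨅ ρ : ℝ, (max (-ρ) 0 + Hmax ρ)) ≤ max (-(0:ℝ)) 0 + Hmax 0 := ciInf_le bddf 0
        _ = Hmax 0 := by simp
        _ ≤ Hmax ρ := by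
            rw [hH0, hHneg ρ h.le]
            have hk1 : (1:ℝ) ≤ (k:ℝ) := by exact_mod_cast hk
            nlinarith
  · exact le_ciInf fun ρ =>
      (ciInf_le bddH ρ).trans (le_add_of_nonneg_left (le_max_right _ _))
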